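/- Let γ > 2, β > 0 and p > 0, and let ū be the unique solution in (0,1) of γ − 1 − γu = exp(−β((1+u)^{−p} − 1)). Then f(ū) = 0 and f'(ū) < 0, where f(u) = γ·h(u)·u(1−u) − u with h(u) = 1/(1 + exp(−β((1+u)^{−p} − 1))). -/

import Mathlib

open Real

/-- The switch function `h(u) = 1/(1 + exp(−β((1+u)^{−p} − 1)))`. -/
noncomputable def hfun (β p u : ℝ) : ℝ :=
  1 / (1 + Real.exp (-(β * ((1 + u) ^ (-p) - 1))))

/-- The reaction term `f(u) = γ h(u) u (1−u) − u`. -/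
noncomputable def ffun (γ β p u : ℝ) : ℝ :=
  γ * hfun β p u * u * (1 - u) - u

/-- at the excited state `ū` one has `f(ū) = 0` and `f'(ū) < 0`. -/
theorem ffun_zero_and_deriv_neg_at_ub
    (γ β p : ℝ) (hγ : 2 < γ) (hβ : 0 < β) (hp : 0 < p)
    (ub : ℝ) (hub : ub ∈ Set.Ioo (0 : ℝ) 1)
    (hub_eq : γ - 1 - γ * ub = Real.exp (-(β * ((1 + ub) ^ (-p) - 1)))) :
    ffun γ β p ub = 0 ∧ deriv (ffun γ β p) ub < 0 := by
  obtain ⟨hx0, hx1⟩ := hub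
  set x := ub with hxdef
  have hx1' : (0:ℝ) < 1 - x := by linarith
  have h1x : (0:ℝ) < 1 + x := by linarith
  set E := Real.exp (-(β * ((1 + x) ^ (-p) - 1))) with hE
  have hEpos : 0 < E := Real.exp_pos _
  have hs : 1 + E = γ * (1 - x) := by rw [← hub_eq]; ring
  have hspos : 0 < 1 + E := by positivity
  have hγ0 : γ ≠ 0 := by linarith
  have hhx : hfun β p x = 1 / (1 + E) := by rw [hfun]
  have hkey : γ * hfun β p x * (1 - x) = 1 := by
    rw [hhx, hs]
    field_simp
  have hpart1 : ffun γ β p x = 0 := by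
    rw [ffun]; linear_combination x * hkey
  refine ⟨hpart1, ?_⟩
  -- derivative computation
  have hA : HasDerivAt (fun u : ℝ => (1 + u) ^ (-p)) (-p * (1 + x) ^ (-p - 1)) x := by
    have h0 : HasDerivAt (fun u : ℝ => 1 + u) 1 x := (hasDerivAt_id x).const_add 1
    have := h0.rpow_const (p := -p) (Or.inl (ne_of_gt h1x))
    simpa using this
  have hg : HasDerivAt (fun u : ℝ => -(β * ((1 + u) ^ (-p) - 1)))
      (-(β * (-p * (1 + x) ^ (-p - 1)))) x := ((hA.sub_const 1).const_mul β).neg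
  have hEd : HasDerivAt (fun u : ℝ => Real.exp (-(β * ((1 + u) ^ (-p) - 1))))
      (E * (-(β * (-p * (1 + x) ^ (-p - 1))))) x := by
    simpa [← hE] using hg.exp
  have hden : HasDerivAt (fun u : ℝ => 1 + Real.exp (-(β * ((1 + u) ^ (-p) - 1))))
      (E * (-(β * (-p * (1 + x) ^ (-p - 1))))) x := hEd.const_add 1
  set hd : ℝ := -(E * (-(β * (-p * (1 + x) ^ (-p - 1))))) / (1 + E) ^ 2 with hhd
  have heq : hfun β p = fun u : ℝ => (1 + Real.exp (-(β * ((1 + u) ^ (-p) - 1))))⁻¹ := by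
    funext u; simp [hfun, one_div]
  have hh : HasDerivAt (hfun β p) hd x := by
    have h' := hden.inv (by rw [← hE]; positivity)
    rw [heq]
    exact h'
  have h1 : HasDerivAt (fun u => γ * hfun β p u) (γ * hd) x := hh.const_mul γ
  have h2 : HasDerivAt (fun u => γ * hfun β p u * u)
      (γ * hd * x + γ * hfun β p x * 1) x := h1.mul (hasDerivAt_id x)
  have h3 : HasDerivAt (fun u : ℝ => 1 - u) (-1) x := by
    simpa using (hasDerivAt_id x).const_sub 1
  have h4 := h2.mul h3
  have h5 := h4.sub (hasDerivAt_id x)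
  have hf : HasDerivAt (ffun γ β p)
      ((γ * hd * x + γ * hfun β p x * 1) * (1 - x) + γ * hfun β p x * x * (-1) - 1) x := by
    exact h5
  rw [hf.deriv]
  -- sign analysis
  have hc : (0:ℝ) < (1 + x) ^ (-p - 1) := Real.rpow_pos_of_pos h1x _
  have hdneg : hd < 0 := by
    rw [hhd]
    have hnum : E * (-(β * (-p * (1 + x) ^ (-p - 1)))) = E * (β * p * (1 + x) ^ (-p - 1)) := by
      ring
    rw [hnum]
    have : 0 < E * (β * p * (1 + x) ^ (-p - 1)) := by positivity
    have hsq : 0 < (1 + E) ^ 2 := by positivity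
    exact div_neg_of_neg_of_pos (by linarith) hsq
  have hhpos : 0 < hfun β p x := by rw [hhx]; positivity
  have t1 : γ * hd * x * (1 - x) < 0 := by
    have hγhd : γ * hd < 0 := mul_neg_of_pos_of_neg (by linarith) hdneg
    exact mul_neg_of_neg_of_pos (mul_neg_of_neg_of_pos hγhd hx0) hx1'
  have t2 : 0 < γ * hfun β p x * x := by positivity
  nlinarith [t1, t2, hkey]
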